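/- arXiv:2101.04665 — 2 statements merged into one kernel-verified Lean document; each statement's English description precedes it below -/
import Mathlib

section
/- Let (X, μ) be a finite measure space, δ a positive integer, and M > 0. Let (u_n) be a sequence of measurable real-valued functions and u a measurable real-valued function such that: (i) ∫ |u_n − u|² dμ → 0 as n → ∞; (ii) ‖u_n‖_{L^{2(δ+1)}(μ)} ≤ M for all n; (iii) u ∈ L^{2(δ+1)}(μ). Then for every g ∈ L^{2(δ+1)}(μ), ∫ u_n^{δ+1}·g dμ → ∫ u^{δ+1}·g dμ as n → ∞. -/
open MeasureTheory Filter

/-- The L^p(μ) norm ‖f‖_{L^p(μ)} = (∫ |f|^p dμ)^{1/p}. -/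
noncomputable def lpNormR {X : Type*} [MeasurableSpace X] (μ : Measure X) (p : ℕ)
    (f : X → ℝ) : ℝ :=
  (∫ x, |f x| ^ p ∂μ) ^ ((1 : ℝ) / p)

section Aux
open Finset
open scoped ENNReal


lemma abs_pow_sub_pow_le'' (a b : ℝ) (k : ℕ) :
    |a ^ k - b ^ k| ≤ (k : ℝ) * (|a| + |b|) ^ (k - 1) * |a - b| := by
  rw [← geom_sum₂_mul a b k, abs_mul]
  refine mul_le_mul_of_nonneg_right ?_ (abs_nonneg _)
  calc |∑ i ∈ range k, a ^ i * b ^ (k - 1 - i)|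
      ≤ ∑ i ∈ range k, |a ^ i * b ^ (k - 1 - i)| := abs_sum_le_sum_abs _ _
    _ ≤ ∑ _i ∈ range k, (|a| + |b|) ^ (k - 1) := by
        refine Finset.sum_le_sum fun i hi => ?_
        rw [abs_mul, abs_pow, abs_pow]
        have hi' : i ≤ k - 1 := by
          have := Finset.mem_range.1 hi; omega
        calc |a| ^ i * |b| ^ (k - 1 - i)
            ≤ (|a| + |b|) ^ i * (|a| + |b|) ^ (k - 1 - i) :=
              mul_le_mul (pow_le_pow_left₀ (abs_nonneg a)
                  (le_add_of_nonneg_right (abs_nonneg b)) i)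
                (pow_le_pow_left₀ (abs_nonneg b) (le_add_of_nonneg_left (abs_nonneg a)) _)
                (by positivity) (by positivity)
          _ = (|a| + |b|) ^ (k - 1) := by
              rw [← pow_add]; congr 1; omega
    _ = (k : ℝ) * (|a| + |b|) ^ (k - 1) := by
        rw [Finset.sum_const, card_range, nsmul_eq_mul]

lemma ennreal_add_pow_le (a b : ℝ≥0∞) (m : ℕ) : (a + b) ^ m ≤ 2 ^ m * (a ^ m + b ^ m) := by
  rcases le_total a b with h | h
  · calc (a + b) ^ m ≤ (2 * b) ^ m := by
          rw [two_mul]; exact pow_le_pow_left₀ zero_le (add_le_add_left h b) m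
      _ = 2 ^ m * b ^ m := mul_pow _ _ _
      _ ≤ 2 ^ m * (a ^ m + b ^ m) := mul_le_mul_right le_add_self _
  · calc (a + b) ^ m ≤ (2 * a) ^ m := by
          rw [two_mul]; exact pow_le_pow_left₀ zero_le (add_le_add_right h a) m
      _ = 2 ^ m * a ^ m := mul_pow _ _ _
      _ ≤ 2 ^ m * (a ^ m + b ^ m) := mul_le_mul_right le_self_add _

lemma real_sq_aux {m : ℕ} (hm : 2 ≤ m) (a b : ℝ) :
    |a - b| ^ 2 ≤ 2 * ((1 + |a| ^ m) + (1 + |b| ^ m)) := by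
  have h2 : ∀ t : ℝ, |t| ^ 2 ≤ 1 + |t| ^ m := by
    intro t
    rcases le_total |t| 1 with h | h
    · calc |t| ^ 2 ≤ 1 ^ 2 := pow_le_pow_left₀ (abs_nonneg t) h 2
        _ ≤ 1 + |t| ^ m := by simp [pow_nonneg (abs_nonneg t)]
    · calc |t| ^ 2 ≤ |t| ^ m := pow_le_pow_right₀ h hm
        _ ≤ 1 + |t| ^ m := by linarith [pow_nonneg (abs_nonneg t) m]
  have h1 : |a - b| ^ 2 ≤ (|a| + |b|) ^ 2 :=
    pow_le_pow_left₀ (abs_nonneg _) (abs_sub _ _) 2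
  nlinarith [h2 a, h2 b, sq_nonneg (|a| - |b|)]

variable {X : Type*} [MeasurableSpace X] {μ : Measure X}

lemma lint_pow_eq {f : X → ℝ} (m : ℕ)
    (hint : Integrable (fun x => |f x| ^ m) μ) :
    ∫⁻ x, ENNReal.ofReal |f x| ^ m ∂μ = ENNReal.ofReal (∫ x, |f x| ^ m ∂μ) := by
  rw [ofReal_integral_eq_lintegral_ofReal hint
    (ae_of_all _ fun x => pow_nonneg (abs_nonneg _) m)]
  simp [ENNReal.ofReal_pow (abs_nonneg _)]

lemma rpow_two_eq (x : ℝ≥0∞) : x ^ (2 : ℝ) = x ^ (2 : ℕ) := by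
  rw [← ENNReal.rpow_natCast x 2]; norm_num

lemma sq_lint_ne_top [IsFiniteMeasure μ] {f : X → ℝ} {m : ℕ} (hm : 2 ≤ m)
    (hint : Integrable (fun x => |f x| ^ m) μ) :
    (∫⁻ x, ENNReal.ofReal |f x| ^ (2 : ℝ) ∂μ) ≠ ∞ := by
  have hb : ∀ x, ENNReal.ofReal |f x| ^ (2 : ℝ) ≤ 1 + ENNReal.ofReal |f x| ^ m := by
    intro x
    rw [rpow_two_eq]
    rcases le_total (ENNReal.ofReal |f x|) 1 with h | h
    · calc ENNReal.ofReal |f x| ^ 2 ≤ 1 ^ 2 := pow_le_pow_left₀ zero_le h 2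
        _ ≤ 1 + _ := by simp
    · calc ENNReal.ofReal |f x| ^ 2 ≤ ENNReal.ofReal |f x| ^ m := pow_le_pow_right₀ h hm
        _ ≤ 1 + _ := le_add_self
  have h1 : (∫⁻ x, ENNReal.ofReal |f x| ^ (2 : ℝ) ∂μ) ≤
      ∫⁻ x, (1 + ENNReal.ofReal |f x| ^ m) ∂μ := lintegral_mono hb
  refine ne_top_of_le_ne_top ?_ h1
  rw [lintegral_add_left measurable_const, lint_pow_eq m hint]
  simp [measure_ne_top, lintegral_const, ENNReal.ofReal_ne_top]

lemma integrable_mul_of_L2' {f g : X → ℝ} (hf : Measurable f) (hg : Measurable g)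
    (hf2 : (∫⁻ x, ENNReal.ofReal |f x| ^ (2 : ℝ) ∂μ) ≠ ∞)
    (hg2 : (∫⁻ x, ENNReal.ofReal |g x| ^ (2 : ℝ) ∂μ) ≠ ∞) :
    Integrable (fun x => f x * g x) μ := by
  refine ⟨(hf.mul hg).aestronglyMeasurable, ?_⟩
  rw [hasFiniteIntegral_iff_norm]
  have hpq : Real.HolderConjugate 2 2 := Real.holderConjugate_iff.mpr ⟨by norm_num, by norm_num⟩
  calc ∫⁻ x, ENNReal.ofReal ‖f x * g x‖ ∂μ
      = ∫⁻ x, ((fun y => ENNReal.ofReal |f y|) * fun y => ENNReal.ofReal |g y|) x ∂μ := by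
        simp [Real.norm_eq_abs, abs_mul, ENNReal.ofReal_mul (abs_nonneg _)]
    _ ≤ (∫⁻ x, ENNReal.ofReal |f x| ^ (2:ℝ) ∂μ) ^ ((1:ℝ)/2) *
        (∫⁻ x, ENNReal.ofReal |g x| ^ (2:ℝ) ∂μ) ^ ((1:ℝ)/2) :=
        ENNReal.lintegral_mul_le_Lp_mul_Lq μ hpq
          (hf.abs.ennreal_ofReal).aemeasurable (hg.abs.ennreal_ofReal).aemeasurable
    _ < ∞ := ENNReal.mul_lt_top
        (ENNReal.rpow_lt_top_of_nonneg (by norm_num) hf2)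
        (ENNReal.rpow_lt_top_of_nonneg (by norm_num) hg2)

lemma lint_rpow2_pow {f : X → ℝ} (k : ℕ) (μ : Measure X) :
    (∫⁻ x, ENNReal.ofReal |f x ^ k| ^ (2 : ℝ) ∂μ) =
      ∫⁻ x, ENNReal.ofReal |f x| ^ (2 * k) ∂μ := by
  refine lintegral_congr fun x => ?_
  rw [abs_pow, ENNReal.ofReal_pow (abs_nonneg _), rpow_two_eq, ← pow_mul, mul_comm k 2]

lemma exp_arith1 {k : ℕ} (hk : 2 ≤ k) :
    (((k-1)*2 : ℕ):ℝ) * ((k:ℝ)/((k:ℝ)-1)) = ((2*k : ℕ):ℝ) := by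
  have h2 : (0:ℝ) < (k:ℝ) - 1 := by
    have : (2:ℝ) ≤ (k:ℝ) := by exact_mod_cast hk
    linarith
  push_cast [Nat.cast_sub (by omega : 1 ≤ k)]
  field_simp

lemma exp_arith2 (k : ℕ) : ((2:ℕ):ℝ) * (k:ℝ) = ((2*k : ℕ):ℝ) := by push_cast; ring
end Aux

open scoped ENNReal

/-- Convergence of the nonlinear advection term (paper's estimate (215)): on a finite
measure space, if ∫|u_n − u|² dμ → 0, the u_n ∈ L^{2(δ+1)}(μ) are uniformly bounded
by M in the L^{2(δ+1)} norm, and u ∈ L^{2(δ+1)}(μ), then for every g ∈ L^{2(δ+1)}(μ),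
∫ u_n^{δ+1}·g dμ → ∫ u^{δ+1}·g dμ. -/
theorem stmt_15 {X : Type*} [MeasurableSpace X] (μ : Measure X) [IsFiniteMeasure μ]
    (δ : ℕ) (hδ : 0 < δ) (M : ℝ) (hM : 0 < M)
    (un : ℕ → X → ℝ) (u : X → ℝ)
    (hun : ∀ n, Measurable (un n)) (hu : Measurable u)
    (hconv : Tendsto (fun n => ∫ x, |un n x - u x| ^ 2 ∂μ) atTop (nhds 0))
    (hunp : ∀ n, Integrable (fun x => |un n x| ^ (2 * (δ + 1))) μ)
    (hbdd : ∀ n, lpNormR μ (2 * (δ + 1)) (un n) ≤ M)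
    (hup : Integrable (fun x => |u x| ^ (2 * (δ + 1))) μ) :
    ∀ g : X → ℝ, Measurable g → Integrable (fun x => |g x| ^ (2 * (δ + 1))) μ →
      Tendsto (fun n => ∫ x, un n x ^ (δ + 1) * g x ∂μ) atTop
        (nhds (∫ x, u x ^ (δ + 1) * g x ∂μ)) := by
  intro g hg hgInt
  set k := δ + 1 with hkdef
  have hk2 : 2 ≤ k := by omega
  have hkR : (2:ℝ) ≤ (k:ℝ) := by exact_mod_cast hk2
  -- L² facts for the powers and g
  have hL2un : ∀ n, (∫⁻ x, ENNReal.ofReal |un n x ^ k| ^ (2 : ℝ) ∂μ) ≠ ∞ := by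
    intro n
    rw [lint_rpow2_pow, lint_pow_eq (2 * k) (hunp n)]
    exact ENNReal.ofReal_ne_top
  have hL2u : (∫⁻ x, ENNReal.ofReal |u x ^ k| ^ (2 : ℝ) ∂μ) ≠ ∞ := by
    rw [lint_rpow2_pow, lint_pow_eq (2 * k) hup]
    exact ENNReal.ofReal_ne_top
  have hL2g : (∫⁻ x, ENNReal.ofReal |g x| ^ (2 : ℝ) ∂μ) ≠ ∞ :=
    sq_lint_ne_top (by omega) hgInt
  -- integrability of the products
  have hIntn : ∀ n, Integrable (fun x => un n x ^ k * g x) μ := fun n =>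
    integrable_mul_of_L2' ((hun n).pow_const k) hg (hL2un n) hL2g
  have hIntu : Integrable (fun x => u x ^ k * g x) μ :=
    integrable_mul_of_L2' (hu.pow_const k) hg hL2u hL2g
  -- integrability of |un - u|²
  have hsq : ∀ n, Integrable (fun x => |un n x - u x| ^ 2) μ := by
    intro n
    refine Integrable.mono'
      (g := fun x => 2 * ((1 + |un n x| ^ (2*k)) + (1 + |u x| ^ (2*k)))) ?_
      (((hun n).sub hu).abs.pow_const 2).aestronglyMeasurable
      (ae_of_all _ fun x => ?_)
    · exact ((((integrable_const 1).add (hunp n)).add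
        ((integrable_const 1).add hup)).const_mul 2)
    · rw [Real.norm_eq_abs, abs_of_nonneg (by positivity)]
      exact real_sq_aux (by omega) _ _
  -- uniform bound on lintegral of |un|^{2k}
  have hIM : ∀ n, (∫⁻ x, ENNReal.ofReal |un n x| ^ (2*k) ∂μ) ≤
      ENNReal.ofReal (M ^ (2*k)) := by
    intro n
    rw [lint_pow_eq (2*k) (hunp n)]
    refine ENNReal.ofReal_le_ofReal ?_
    have h0 : (0:ℝ) ≤ ∫ x, |un n x| ^ (2*k) ∂μ :=
      integral_nonneg fun x => by positivity
    have hb := hbdd n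
    unfold lpNormR at hb
    have h2 := Real.rpow_le_rpow (Real.rpow_nonneg h0 _) hb
      (by positivity : (0:ℝ) ≤ ((2*k : ℕ) : ℝ))
    rw [← Real.rpow_mul h0] at h2
    rw [show (1:ℝ)/((2*k : ℕ):ℝ) * ((2*k : ℕ):ℝ) = 1 by
        field_simp] at h2
    rw [Real.rpow_one] at h2
    calc ∫ x, |un n x| ^ (2*k) ∂μ ≤ M ^ (((2*k : ℕ)):ℝ) := h2
      _ = M ^ (2*k) := by rw [Real.rpow_natCast]
  -- constants
  set IU : ℝ≥0∞ := ENNReal.ofReal (∫ x, |u x| ^ (2*k) ∂μ) with hIUdef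
  set IG : ℝ≥0∞ := ENNReal.ofReal (∫ x, |g x| ^ (2*k) ∂μ) with hIGdef
  set IM : ℝ≥0∞ := ENNReal.ofReal (M ^ (2*k)) with hIMdef
  set S2 : ℝ≥0∞ := 2 ^ (2*k) * (IM + IU) with hS2def
  have hS2top : S2 ≠ ∞ := by
    simp [hS2def, hIMdef, hIUdef, ENNReal.mul_ne_top, ENNReal.add_ne_top,
      ENNReal.ofReal_ne_top]
  have mNu : Measurable fun x => ENNReal.ofReal |u x| := hu.abs.ennreal_ofReal
  have mNg : Measurable fun x => ENNReal.ofReal |g x| := hg.abs.ennreal_ofReal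
  have mNun : ∀ n, Measurable fun x => ENNReal.ofReal |un n x| := fun n =>
    (hun n).abs.ennreal_ofReal
  have hSn : ∀ n, (∫⁻ x, (ENNReal.ofReal |un n x| + ENNReal.ofReal |u x|) ^ (2*k) ∂μ)
      ≤ S2 := by
    intro n
    calc ∫⁻ x, (ENNReal.ofReal |un n x| + ENNReal.ofReal |u x|) ^ (2*k) ∂μ
        ≤ ∫⁻ x, 2 ^ (2*k) *
            (ENNReal.ofReal |un n x| ^ (2*k) + ENNReal.ofReal |u x| ^ (2*k)) ∂μ :=
          lintegral_mono fun x => ennreal_add_pow_le _ _ _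
      _ = 2 ^ (2*k) * ((∫⁻ x, ENNReal.ofReal |un n x| ^ (2*k) ∂μ) +
            ∫⁻ x, ENNReal.ofReal |u x| ^ (2*k) ∂μ) := by
          rw [lintegral_const_mul _ (f := fun x => ENNReal.ofReal |un n x| ^ (2*k) + ENNReal.ofReal |u x| ^ (2*k))
              (((mNun n).pow_const _).add (mNu.pow_const _)),
            lintegral_add_left ((mNun n).pow_const _)]
      _ ≤ S2 := mul_le_mul_right
          (add_le_add (hIM n) (le_of_eq (lint_pow_eq _ hup))) _
  -- conjugate exponents
  have hk1 : (0:ℝ) < (k:ℝ) - 1 := by linarith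
  have hkne : ((k:ℝ) - 1) ≠ 0 := ne_of_gt hk1
  have hkne0 : (k:ℝ) ≠ 0 := by positivity
  have hpq : Real.HolderConjugate ((k:ℝ)/((k:ℝ)-1)) (k:ℝ) := by
    rw [Real.holderConjugate_iff]
    constructor
    · rw [lt_div_iff₀ hk1]; linarith
    · rw [inv_div]; field_simp; ring
  have hp0 : (0:ℝ) ≤ 1/((k:ℝ)/((k:ℝ)-1)) := by positivity
  have hq0 : (0:ℝ) ≤ 1/(k:ℝ) := by positivity
  -- second Hölder estimate
  have hH2 : ∀ n, (∫⁻ x, ((ENNReal.ofReal |un n x| + ENNReal.ofReal |u x|) ^ (k-1) *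
      ENNReal.ofReal |g x|) ^ (2:ℝ) ∂μ) ≤ S2 ^ (1/((k:ℝ)/((k:ℝ)-1))) * IG ^ (1/(k:ℝ)) := by
    intro n
    have mS : Measurable fun x => ENNReal.ofReal |un n x| + ENNReal.ofReal |u x| :=
      (mNun n).add mNu
    calc ∫⁻ x, ((ENNReal.ofReal |un n x| + ENNReal.ofReal |u x|) ^ (k-1) *
          ENNReal.ofReal |g x|) ^ (2:ℝ) ∂μ
        = ∫⁻ x, ((fun y => (ENNReal.ofReal |un n y| + ENNReal.ofReal |u y|) ^ ((k-1)*2)) *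
            (fun y => ENNReal.ofReal |g y| ^ 2)) x ∂μ := by
          refine lintegral_congr fun x => ?_
          simp only [Pi.mul_apply]
          rw [rpow_two_eq, mul_pow, ← pow_mul]
      _ ≤ (∫⁻ x, ((ENNReal.ofReal |un n x| + ENNReal.ofReal |u x|) ^ ((k-1)*2))
              ^ ((k:ℝ)/((k:ℝ)-1)) ∂μ) ^ (1/((k:ℝ)/((k:ℝ)-1))) *
            (∫⁻ x, (ENNReal.ofReal |g x| ^ 2) ^ (k:ℝ) ∂μ) ^ (1/(k:ℝ)) :=
          ENNReal.lintegral_mul_le_Lp_mul_Lq μ hpq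
            (mS.pow_const _).aemeasurable (mNg.pow_const _).aemeasurable
      _ = (∫⁻ x, (ENNReal.ofReal |un n x| + ENNReal.ofReal |u x|) ^ (2*k) ∂μ)
              ^ (1/((k:ℝ)/((k:ℝ)-1))) *
            (∫⁻ x, ENNReal.ofReal |g x| ^ (2*k) ∂μ) ^ (1/(k:ℝ)) := by
          congr 1
          · congr 1
            refine lintegral_congr fun x => ?_
            rw [← ENNReal.rpow_natCast _ ((k-1)*2), ← ENNReal.rpow_mul,
              ← ENNReal.rpow_natCast _ (2*k)]
            congr 1
            exact exp_arith1 hk2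
          · congr 1
            refine lintegral_congr fun x => ?_
            rw [← ENNReal.rpow_natCast _ 2, ← ENNReal.rpow_mul,
              ← ENNReal.rpow_natCast _ (2*k)]
            congr 1
            exact exp_arith2 k
      _ ≤ S2 ^ (1/((k:ℝ)/((k:ℝ)-1))) * IG ^ (1/(k:ℝ)) := by
          refine mul_le_mul' (ENNReal.rpow_le_rpow (hSn n) hp0) ?_
          rw [lint_pow_eq _ hgInt]
  set C3 : ℝ≥0∞ := S2 ^ (1/((k:ℝ)/((k:ℝ)-1))) * IG ^ (1/(k:ℝ)) with hC3def
  have hC3top : C3 ≠ ∞ := by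
    rw [hC3def]
    exact ENNReal.mul_ne_top (ENNReal.rpow_ne_top_of_nonneg hp0 hS2top)
      (ENNReal.rpow_ne_top_of_nonneg hq0 ENNReal.ofReal_ne_top)
  set C : ℝ≥0∞ := (k:ℝ≥0∞) * C3 ^ ((1:ℝ)/2) with hCdef
  have hCtop : C ≠ ∞ := by
    rw [hCdef]
    exact ENNReal.mul_ne_top (ENNReal.natCast_ne_top k)
      (ENNReal.rpow_ne_top_of_nonneg (by norm_num) hC3top)
  -- key lintegral estimate
  have keyD : ∀ n, (∫⁻ x, ENNReal.ofReal ‖(un n x ^ k - u x ^ k) * g x‖ ∂μ) ≤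
      (ENNReal.ofReal (∫ x, |un n x - u x| ^ 2 ∂μ)) ^ ((1:ℝ)/2) * C := by
    intro n
    have hpt : ∀ x, ENNReal.ofReal ‖(un n x ^ k - u x ^ k) * g x‖ ≤
        (k:ℝ≥0∞) * (ENNReal.ofReal |un n x - u x| *
          ((ENNReal.ofReal |un n x| + ENNReal.ofReal |u x|) ^ (k-1) *
            ENNReal.ofReal |g x|)) := by
      intro x
      have h := abs_pow_sub_pow_le'' (un n x) (u x) k
      calc ENNReal.ofReal ‖(un n x ^ k - u x ^ k) * g x‖
          = ENNReal.ofReal (|un n x ^ k - u x ^ k| * |g x|) := by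
            rw [Real.norm_eq_abs, abs_mul]
        _ ≤ ENNReal.ofReal ((k:ℝ) * (|un n x - u x| *
              ((|un n x| + |u x|) ^ (k-1) * |g x|))) :=
            ENNReal.ofReal_le_ofReal
              ((mul_le_mul_of_nonneg_right h (abs_nonneg _)).trans_eq (by ring))
        _ = _ := by
            rw [ENNReal.ofReal_mul (by positivity), ENNReal.ofReal_natCast,
              ENNReal.ofReal_mul (abs_nonneg _), ENNReal.ofReal_mul (by positivity),
              ENNReal.ofReal_pow (by positivity),
              ENNReal.ofReal_add (abs_nonneg _) (abs_nonneg _)]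
    have mD : Measurable fun x => ENNReal.ofReal |un n x - u x| *
        ((ENNReal.ofReal |un n x| + ENNReal.ofReal |u x|) ^ (k-1) *
          ENNReal.ofReal |g x|) :=
      (((hun n).sub hu).abs.ennreal_ofReal).mul
        ((((mNun n).add mNu).pow_const _).mul mNg)
    have hE : (∫⁻ x, ENNReal.ofReal |un n x - u x| ^ (2:ℝ) ∂μ) =
        ENNReal.ofReal (∫ x, |un n x - u x| ^ 2 ∂μ) := by
      rw [← lint_pow_eq 2 (hsq n)]
      exact lintegral_congr fun x => rpow_two_eq _
    calc ∫⁻ x, ENNReal.ofReal ‖(un n x ^ k - u x ^ k) * g x‖ ∂μ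
        ≤ ∫⁻ x, (k:ℝ≥0∞) * (ENNReal.ofReal |un n x - u x| *
            ((ENNReal.ofReal |un n x| + ENNReal.ofReal |u x|) ^ (k-1) *
              ENNReal.ofReal |g x|)) ∂μ := lintegral_mono hpt
      _ = (k:ℝ≥0∞) * ∫⁻ x, ((fun y => ENNReal.ofReal |un n y - u y|) *
            (fun y => (ENNReal.ofReal |un n y| + ENNReal.ofReal |u y|) ^ (k-1) *
              ENNReal.ofReal |g y|)) x ∂μ := lintegral_const_mul _ mD
      _ ≤ (k:ℝ≥0∞) * ((∫⁻ x, ENNReal.ofReal |un n x - u x| ^ (2:ℝ) ∂μ) ^ ((1:ℝ)/2) *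
            (∫⁻ x, ((ENNReal.ofReal |un n x| + ENNReal.ofReal |u x|) ^ (k-1) *
              ENNReal.ofReal |g x|) ^ (2:ℝ) ∂μ) ^ ((1:ℝ)/2)) := by
          refine mul_le_mul_right ?_ _
          exact ENNReal.lintegral_mul_le_Lp_mul_Lq μ (Real.holderConjugate_iff.mpr ⟨by norm_num, by norm_num⟩)
            (((hun n).sub hu).abs.ennreal_ofReal).aemeasurable
            ((((mNun n).add mNu).pow_const _).mul mNg).aemeasurable
      _ ≤ (k:ℝ≥0∞) * ((ENNReal.ofReal (∫ x, |un n x - u x| ^ 2 ∂μ)) ^ ((1:ℝ)/2) *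
            C3 ^ ((1:ℝ)/2)) := by
          rw [hE]
          exact mul_le_mul_right
            (mul_le_mul' le_rfl (ENNReal.rpow_le_rpow (hH2 n) (by norm_num))) _
      _ = (ENNReal.ofReal (∫ x, |un n x - u x| ^ 2 ∂μ)) ^ ((1:ℝ)/2) * C := by
          rw [hCdef]; ring
  -- real key estimate
  have key : ∀ n, ‖(∫ x, un n x ^ k * g x ∂μ) - ∫ x, u x ^ k * g x ∂μ‖ ≤
      ((ENNReal.ofReal (∫ x, |un n x - u x| ^ 2 ∂μ)) ^ ((1:ℝ)/2) * C).toReal := by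
    intro n
    have e1 : (∫ x, un n x ^ k * g x ∂μ) - ∫ x, u x ^ k * g x ∂μ =
        ∫ x, (un n x ^ k - u x ^ k) * g x ∂μ := by
      rw [← integral_sub (hIntn n) hIntu]
      congr 1; funext x; ring
    rw [e1]
    refine le_trans (norm_integral_le_lintegral_norm _) ?_
    exact ENNReal.toReal_mono
      (ENNReal.mul_ne_top (ENNReal.rpow_ne_top_of_nonneg (by norm_num)
        ENNReal.ofReal_ne_top) hCtop) (keyD n)
  -- the bound tends to 0
  have T1 : Tendsto (fun n => ENNReal.ofReal (∫ x, |un n x - u x| ^ 2 ∂μ)) atTop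
      (nhds 0) := by
    have h := (ENNReal.continuous_ofReal.tendsto 0).comp hconv
    simp only [Function.comp_def, ENNReal.ofReal_zero] at h
    exact h
  have T2 := T1.ennrpow_const ((1:ℝ)/2)
  rw [ENNReal.zero_rpow_of_pos (by norm_num)] at T2
  have T3 := ENNReal.Tendsto.mul_const T2 (Or.inr hCtop)
  rw [zero_mul] at T3
  have T4 : Tendsto (fun n =>
      ((ENNReal.ofReal (∫ x, |un n x - u x| ^ 2 ∂μ)) ^ ((1:ℝ)/2) * C).toReal) atTop
      (nhds 0) := by
    have h := (ENNReal.tendsto_toReal (by simp : (0:ℝ≥0∞) ≠ ∞)).comp T3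
    simp only [Function.comp_def, ENNReal.toReal_zero] at h
    exact h
  have T5 := squeeze_zero_norm key T4
  have T6 := T5.add_const (∫ x, u x ^ k * g x ∂μ)
  simpa using T6
end

section
/- Let (X, μ) be a measure space, δ a positive integer, and let u, v, h : X → ℝ be measurable functions such that |u|^δ·(u−v) ∈ L²(μ), |v|^δ·(u−v) ∈ L²(μ), and h ∈ L²(μ). Then (u^{δ+1} − v^{δ+1})·h is integrable and | ∫ (u^{δ+1} − v^{δ+1})·h dμ | ≤ 2^{δ−1}(δ+1)·( ‖|u|^δ(u−v)‖_{L²(μ)} + ‖|v|^δ(u−v)‖_{L²(μ)} )·‖h‖_{L²(μ)}. -/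
open MeasureTheory Finset

/-- The L²(μ) norm ‖f‖_{L²(μ)} = (∫ |f|² dμ)^{1/2}. -/
noncomputable def l2NormR {X : Type*} [MeasurableSpace X] (μ : Measure X)
    (f : X → ℝ) : ℝ :=
  (∫ x, |f x| ^ 2 ∂μ) ^ ((1 : ℝ) / 2)


lemma term_bound (x y : ℝ) (δ i : ℕ) (hi : i ≤ δ) :
    |x|^i * |y|^(δ - i) ≤ |x|^δ + |y|^δ := by
  rcases le_total (|x|) (|y|) with hxy | hxy
  · calc |x|^i * |y|^(δ-i) ≤ |y|^i * |y|^(δ-i) := by gcongr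
        _ = |y|^δ := by rw [← pow_add]; congr 1; omega
        _ ≤ |x|^δ + |y|^δ := le_add_of_nonneg_left (by positivity)
  · calc |x|^i * |y|^(δ-i) ≤ |x|^i * |x|^(δ-i) := by gcongr
        _ = |x|^δ := by rw [← pow_add]; congr 1; omega
        _ ≤ |x|^δ + |y|^δ := le_add_of_nonneg_right (by positivity)

lemma pow_diff_bound (x y : ℝ) (δ : ℕ) :
    |x ^ (δ+1) - y ^ (δ+1)| ≤ ((δ:ℝ)+1) * ((|x|^δ + |y|^δ) * |x - y|) := by
  rw [← geom_sum₂_mul x y (δ+1), abs_mul]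
  have hs : |∑ i ∈ range (δ+1), x ^ i * y ^ (δ + 1 - 1 - i)| ≤ ((δ:ℝ)+1) * (|x|^δ + |y|^δ) := by
    calc |∑ i ∈ range (δ+1), x ^ i * y ^ (δ + 1 - 1 - i)|
        ≤ ∑ i ∈ range (δ+1), |x ^ i * y ^ (δ + 1 - 1 - i)| := Finset.abs_sum_le_sum_abs _ _
      _ ≤ ∑ i ∈ range (δ+1), (|x|^δ + |y|^δ) := by
          refine Finset.sum_le_sum fun i hi => ?_
          rw [abs_mul, abs_pow, abs_pow]
          have : δ + 1 - 1 - i = δ - i := by omega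
          rw [this]
          exact term_bound x y δ i (by simpa [Nat.lt_succ_iff] using Finset.mem_range.mp hi)
      _ = ((δ:ℝ)+1) * (|x|^δ + |y|^δ) := by
          rw [Finset.sum_const, Finset.card_range]; push_cast; ring
  calc |∑ i ∈ range (δ+1), x ^ i * y ^ (δ + 1 - 1 - i)| * |x - y|
      ≤ (((δ:ℝ)+1) * (|x|^δ + |y|^δ)) * |x - y| := by gcongr
    _ = ((δ:ℝ)+1) * ((|x|^δ + |y|^δ) * |x - y|) := by ring

/-- Cauchy–Schwarz. -/
lemma cs_lemma {X : Type*} [MeasurableSpace X] (μ : Measure X) (f g : X → ℝ)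
    (hf : AEStronglyMeasurable f μ) (hg : AEStronglyMeasurable g μ)
    (hf2 : Integrable (fun x => f x ^ 2) μ) (hg2 : Integrable (fun x => g x ^ 2) μ) :
    Integrable (fun x => f x * g x) μ ∧
      ∫ x, |f x * g x| ∂μ ≤
        (∫ x, f x ^ 2 ∂μ) ^ ((1:ℝ)/2) * (∫ x, g x ^ 2 ∂μ) ^ ((1:ℝ)/2) := by
  have hmul : AEStronglyMeasurable (fun x => f x * g x) μ := hf.mul hg
  have hint : Integrable (fun x => f x * g x) μ := by
    refine Integrable.mono ((hf2.add hg2).const_mul (1/2)) hmul ?_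
    filter_upwards with x
    simp only [Pi.add_apply, norm_mul, Real.norm_eq_abs, abs_mul]
    rw [abs_of_nonneg (by positivity : (0:ℝ) ≤ f x ^2 + g x ^2),
      abs_of_nonneg (by norm_num : (0:ℝ) ≤ (1/2:ℝ))]
    nlinarith [abs_nonneg (f x), abs_nonneg (g x), sq_abs (f x), sq_abs (g x),
      two_mul_le_add_sq (|f x|) (|g x|)]
  refine ⟨hint, ?_⟩
  set A := ∫ x, f x ^ 2 ∂μ with hA
  set B := ∫ x, g x ^ 2 ∂μ with hB
  set I := ∫ x, |f x * g x| ∂μ with hI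
  have hA0 : 0 ≤ A := integral_nonneg fun x => sq_nonneg _
  have hB0 : 0 ≤ B := integral_nonneg fun x => sq_nonneg _
  have hI0 : 0 ≤ I := integral_nonneg fun x => abs_nonneg _
  have key : ∀ t : ℝ, 0 < t → 2 * I ≤ t * A + B / t := by
    intro t ht
    have h1 : (fun x => 2 * |f x * g x|) = fun x => 2 * |f x * g x| := rfl
    have hle : ∀ x, 2 * |f x * g x| ≤ t * f x ^ 2 + g x ^ 2 / t := by
      intro x
      have h2 := two_mul_le_add_sq (Real.sqrt t * |f x|) (|g x| / Real.sqrt t)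
      have hst : Real.sqrt t ^ 2 = t := Real.sq_sqrt ht.le
      have hstpos : 0 < Real.sqrt t := Real.sqrt_pos.mpr ht
      calc 2 * |f x * g x| = 2 * (Real.sqrt t * |f x|) * (|g x| / Real.sqrt t) := by
            rw [abs_mul]; field_simp
        _ ≤ (Real.sqrt t * |f x|)^2 + (|g x| / Real.sqrt t)^2 := h2
        _ = t * f x ^ 2 + g x ^ 2 / t := by
            rw [mul_pow, div_pow, hst, sq_abs, sq_abs]
    calc 2 * I = ∫ x, 2 * |f x * g x| ∂μ := by
          rw [hI, ← integral_const_mul]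
      _ ≤ ∫ x, (t * f x ^ 2 + g x ^ 2 / t) ∂μ := by
          refine integral_mono (hint.abs.const_mul 2) ((hf2.const_mul t).add (hg2.div_const t)) ?_
          intro x; exact hle x
      _ = t * A + B / t := by
          rw [integral_add (hf2.const_mul t) (hg2.div_const t)]
          simp only [integral_const_mul, integral_div, hA, hB]
  have hsq : I ^ 2 ≤ A * B := by
    rcases eq_or_lt_of_le hI0 with hI' | hI'
    · rw [← hI']; simpa using mul_nonneg hA0 hB0
    rcases eq_or_lt_of_le hA0 with hA' | hA'
    · exfalso
      have hk := key ((B + 1) / I) (by positivity)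
      rw [← hA'] at hk
      have hBt : B / ((B + 1) / I) = B * I / (B + 1) := by field_simp
      rw [hBt] at hk
      have h5 : B * I / (B + 1) < I := by
        rw [div_lt_iff₀ (by positivity)]; nlinarith
      linarith
    · have hk := key (I / A) (by positivity)
      have h2 : B / (I / A) = B * A / I := by field_simp
      have hIA : I / A * A = I := by field_simp
      rw [h2, hIA] at hk
      have h4 : I ≤ B * A / I := by linarith
      rw [le_div_iff₀ hI'] at h4
      nlinarith
  have : I ≤ Real.sqrt (A * B) := by
    rw [← Real.sqrt_sq hI0]
    exact Real.sqrt_le_sqrt hsq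
  calc I ≤ Real.sqrt (A * B) := this
    _ = Real.sqrt A * Real.sqrt B := Real.sqrt_mul hA0 _
    _ = A ^ ((1:ℝ)/2) * B ^ ((1:ℝ)/2) := by
        rw [Real.sqrt_eq_rpow, Real.sqrt_eq_rpow]

/-- Cauchy–Schwarz estimate for the advection-difference term (paper's estimate (6.49)):
if |u|^δ(u−v), |v|^δ(u−v), h ∈ L²(μ), then (u^{δ+1} − v^{δ+1})·h is integrable and
| ∫ (u^{δ+1} − v^{δ+1})·h dμ | ≤
  2^{δ−1}(δ+1)·( ‖|u|^δ(u−v)‖_{L²} + ‖|v|^δ(u−v)‖_{L²} )·‖h‖_{L²}. -/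
theorem stmt_17 {X : Type*} [MeasurableSpace X] (μ : Measure X)
    (δ : ℕ) (hδ : 0 < δ) (u v h : X → ℝ)
    (hu : Measurable u) (hv : Measurable v) (hh : Measurable h)
    (hu2 : Integrable (fun x => (|u x| ^ δ * (u x - v x)) ^ 2) μ)
    (hv2 : Integrable (fun x => (|v x| ^ δ * (u x - v x)) ^ 2) μ)
    (hh2 : Integrable (fun x => |h x| ^ 2) μ) :
    Integrable (fun x => (u x ^ (δ + 1) - v x ^ (δ + 1)) * h x) μ ∧
      |∫ x, (u x ^ (δ + 1) - v x ^ (δ + 1)) * h x ∂μ| ≤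
        2 ^ (δ - 1) * ((δ : ℝ) + 1) *
          (l2NormR μ (fun x => |u x| ^ δ * (u x - v x)) +
            l2NormR μ (fun x => |v x| ^ δ * (u x - v x))) *
          l2NormR μ h := by
  set f1 : X → ℝ := fun x => |u x| ^ δ * (u x - v x) with hf1
  set f2 : X → ℝ := fun x => |v x| ^ δ * (u x - v x) with hf2
  have hf1m : AEStronglyMeasurable f1 μ :=
    (((hu.abs.pow_const δ).mul (hu.sub hv))).aestronglyMeasurable
  have hf2m : AEStronglyMeasurable f2 μ :=
    (((hv.abs.pow_const δ).mul (hu.sub hv))).aestronglyMeasurable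
  have hhm : AEStronglyMeasurable h μ := hh.aestronglyMeasurable
  have hh2' : Integrable (fun x => h x ^ 2) μ := by simpa [sq_abs] using hh2
  obtain ⟨hint1, hcs1⟩ := cs_lemma μ f1 h hf1m hhm hu2 hh2'
  obtain ⟨hint2, hcs2⟩ := cs_lemma μ f2 h hf2m hhm hv2 hh2'
  set N1 := (∫ x, f1 x ^ 2 ∂μ) ^ ((1:ℝ)/2) with hN1
  set N2 := (∫ x, f2 x ^ 2 ∂μ) ^ ((1:ℝ)/2) with hN2
  set Nh := (∫ x, h x ^ 2 ∂μ) ^ ((1:ℝ)/2) with hNh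
  have hN1e : l2NormR μ f1 = N1 := by
    simp only [l2NormR, sq_abs, hN1]
  have hN2e : l2NormR μ f2 = N2 := by
    simp only [l2NormR, sq_abs, hN2]
  have hNhe : l2NormR μ h = Nh := by
    simp only [l2NormR, sq_abs, hNh]
  have hN10 : 0 ≤ N1 := Real.rpow_nonneg (integral_nonneg fun x => sq_nonneg _) _
  have hN20 : 0 ≤ N2 := Real.rpow_nonneg (integral_nonneg fun x => sq_nonneg _) _
  have hNh0 : 0 ≤ Nh := Real.rpow_nonneg (integral_nonneg fun x => sq_nonneg _) _
  -- pointwise bound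
  have hpt : ∀ x, |(u x ^ (δ + 1) - v x ^ (δ + 1)) * h x| ≤
      ((δ:ℝ)+1) * (|f1 x * h x| + |f2 x * h x|) := by
    intro x
    have hb := pow_diff_bound (u x) (v x) δ
    have e1 : |f1 x| = |u x| ^ δ * |u x - v x| := by
      rw [hf1, abs_mul, abs_of_nonneg (by positivity : (0:ℝ) ≤ |u x| ^ δ)]
    have e2 : |f2 x| = |v x| ^ δ * |u x - v x| := by
      rw [hf2, abs_mul, abs_of_nonneg (by positivity : (0:ℝ) ≤ |v x| ^ δ)]
    calc |(u x ^ (δ + 1) - v x ^ (δ + 1)) * h x|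
        = |u x ^ (δ + 1) - v x ^ (δ + 1)| * |h x| := abs_mul _ _
      _ ≤ (((δ:ℝ)+1) * ((|u x|^δ + |v x|^δ) * |u x - v x|)) * |h x| := by
          gcongr
      _ = ((δ:ℝ)+1) * ((|u x|^δ * |u x - v x|) * |h x| + (|v x|^δ * |u x - v x|) * |h x|) := by
          ring
      _ = ((δ:ℝ)+1) * (|f1 x * h x| + |f2 x * h x|) := by
          rw [abs_mul (f1 x) (h x), abs_mul (f2 x) (h x), e1, e2]
  have hmeasF : AEStronglyMeasurable (fun x => (u x ^ (δ + 1) - v x ^ (δ + 1)) * h x) μ :=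
    (((hu.pow_const _).sub (hv.pow_const _)).mul hh).aestronglyMeasurable
  have hmaj : Integrable (fun x => ((δ:ℝ)+1) * (|f1 x * h x| + |f2 x * h x|)) μ :=
    (hint1.abs.add hint2.abs).const_mul _
  have hintF : Integrable (fun x => (u x ^ (δ + 1) - v x ^ (δ + 1)) * h x) μ := by
    refine Integrable.mono hmaj hmeasF ?_
    filter_upwards with x
    rw [Real.norm_eq_abs, Real.norm_eq_abs]
    rw [abs_of_nonneg (by positivity : (0:ℝ) ≤ ((δ:ℝ)+1) * (|f1 x * h x| + |f2 x * h x|))]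
    exact hpt x
  refine ⟨hintF, ?_⟩
  have h2pow : (1:ℝ) ≤ 2 ^ (δ - 1) := one_le_pow₀ one_le_two
  calc |∫ x, (u x ^ (δ + 1) - v x ^ (δ + 1)) * h x ∂μ|
      ≤ ∫ x, |(u x ^ (δ + 1) - v x ^ (δ + 1)) * h x| ∂μ := by
        simpa only [Real.norm_eq_abs] using
          norm_integral_le_integral_norm (fun x => (u x ^ (δ + 1) - v x ^ (δ + 1)) * h x) (μ := μ)
    _ ≤ ∫ x, ((δ:ℝ)+1) * (|f1 x * h x| + |f2 x * h x|) ∂μ := by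
        refine integral_mono hintF.abs hmaj ?_
        intro x; exact hpt x
    _ = ((δ:ℝ)+1) * ((∫ x, |f1 x * h x| ∂μ) + ∫ x, |f2 x * h x| ∂μ) := by
        rw [integral_const_mul, integral_add hint1.abs hint2.abs]
    _ ≤ ((δ:ℝ)+1) * (N1 * Nh + N2 * Nh) := by
        have := add_le_add hcs1 hcs2
        nlinarith [this, Nat.cast_nonneg (α := ℝ) δ]
    _ = 1 * (((δ:ℝ)+1) * ((N1 + N2) * Nh)) := by ring
    _ ≤ 2 ^ (δ - 1) * (((δ:ℝ)+1) * ((N1 + N2) * Nh)) := by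
        have hpos : (0:ℝ) ≤ ((δ:ℝ)+1) * ((N1 + N2) * Nh) := by positivity
        nlinarith [h2pow, hpos]
    _ = 2 ^ (δ - 1) * ((δ:ℝ)+1) * (l2NormR μ f1 + l2NormR μ f2) * l2NormR μ h := by
        rw [hN1e, hN2e, hNhe]; ring
end
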